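/- With α = (√5−1)/2, M₁ = [[1,−α],[α,1]], M₂ = [[α,−1],[1,α]], and integers X, Y, Z, W with XW − YZ = 1, the matrix M₂^{-1} M₁ [[X,Y],[Z,W]] M₁^{-1} M₂ has integer entries if and only if X + 3Y + 3Z + 4W ≡ 0 (mod 5). In particular this holds whenever X ≡ W ≡ 1 and Y ≡ Z ≡ 0 (mod 5). -/

import Mathlib

open Matrix

lemma int_div5 (c : ℤ) : (∃ n : ℤ, (c : ℝ) / 5 = n) ↔ ((c : ZMod 5) = 0) := by
  rw [ZMod.intCast_zmod_eq_zero_iff_dvd]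
  constructor
  · rintro ⟨n, hn⟩
    refine ⟨n, ?_⟩
    have h : (c : ℝ) = n * 5 := by
      field_simp at hn; linarith
    have : c = n * 5 := by exact_mod_cast h
    omega
  · rintro ⟨n, rfl⟩
    exact ⟨n, by push_cast; ring⟩

theorem intersection_congruence (X Y Z W : ℤ) (hdet : X * W - Y * Z = 1) :
    let α : ℝ := (Real.sqrt 5 - 1) / 2
    let M₁ : Matrix (Fin 2) (Fin 2) ℝ := !![1, -α; α, 1]
    let M₂ : Matrix (Fin 2) (Fin 2) ℝ := !![α, -1; 1, α]
    let M : Matrix (Fin 2) (Fin 2) ℝ :=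
      M₂⁻¹ * M₁ * !![(X : ℝ), Y; Z, W] * M₁⁻¹ * M₂
    ((∀ i j, ∃ n : ℤ, M i j = n) ↔ ((X + 3 * Y + 3 * Z + 4 * W : ℤ) : ZMod 5) = 0) ∧
    ((X : ZMod 5) = 1 → (W : ZMod 5) = 1 → (Y : ZMod 5) = 0 → (Z : ZMod 5) = 0 →
      ∀ i j, ∃ n : ℤ, M i j = n) := by
  intro α M₁ M₂ M
  have h5 : Real.sqrt 5 ^ 2 = 5 := Real.sq_sqrt (by norm_num)
  have ha : α ^ 2 + α = 1 := by
    show ((Real.sqrt 5 - 1) / 2) ^ 2 + (Real.sqrt 5 - 1) / 2 = 1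
    linear_combination h5 / 4
  have hd : (1 + α ^ 2) ≠ 0 := by nlinarith [sq_nonneg α]
  have h2lt : (2 : ℝ) < Real.sqrt 5 := by nlinarith [Real.sqrt_nonneg 5, h5]
  have han : α ≠ 0 := by
    show ((Real.sqrt 5 - 1) / 2) ≠ 0
    intro h; nlinarith
  have h1 : M₁⁻¹ = (1 + α ^ 2)⁻¹ • !![1, α; -α, 1] := by
    apply inv_eq_right_inv
    ext i j
    fin_cases i <;> fin_cases j <;>
      simp [M₁, Matrix.mul_apply, Fin.sum_univ_two] <;> field_simp <;> ring
  have h2 : M₂⁻¹ = (1 + α ^ 2)⁻¹ • !![α, 1; -1, α] := by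
    apply inv_eq_right_inv
    ext i j
    fin_cases i <;> fin_cases j <;>
      simp [M₂, Matrix.mul_apply, Fin.sum_univ_two] <;> field_simp <;> ring
  set N : Matrix (Fin 2) (Fin 2) ℤ :=
    !![4*X+2*Y+2*Z+W, -2*X+4*Y-Z+2*W; -2*X-Y+4*Z+2*W, X-2*Y-2*Z+4*W] with hN
  have hP : (!![α, 1; -1, α] : Matrix (Fin 2) (Fin 2) ℝ) * M₁ * !![(X : ℝ), Y; Z, W] *
      !![1, α; -α, 1] * M₂ = α ^ 2 • (N.map (Int.cast : ℤ → ℝ)) := by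
    ext i j
    fin_cases i <;> fin_cases j <;>
      simp [M₁, M₂, hN, Matrix.mul_apply, Fin.sum_univ_two, Matrix.map_apply] <;> push_cast
    · linear_combination ((-1:ℝ)*W + (-1)*α*W + (-2)*α*Z + (-2)*α*Y + α^2*W) * ha
    · linear_combination ((Z:ℝ) + (-2)*α*W + α*Z + 2*α*X + (-1)*α^2*Z) * ha
    · linear_combination ((Y:ℝ) + (-2)*α*W + α*Y + 2*α*X + (-1)*α^2*Y) * ha
    · linear_combination ((-1:ℝ)*X + 2*α*Z + 2*α*Y + (-1)*α*X + α^2*X) * ha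
  have hfact : M = ((1 + α ^ 2)⁻¹ * (1 + α ^ 2)⁻¹) •
      ((!![α, 1; -1, α] : Matrix (Fin 2) (Fin 2) ℝ) * M₁ * !![(X : ℝ), Y; Z, W] *
        !![1, α; -α, 1] * M₂) := by
    show M₂⁻¹ * M₁ * !![(X : ℝ), Y; Z, W] * M₁⁻¹ * M₂ = _
    rw [h1, h2]
    simp only [Matrix.smul_mul, Matrix.mul_smul, smul_smul]
  have hval : (1 + α ^ 2)⁻¹ * (1 + α ^ 2)⁻¹ * α ^ 2 = 1 / 5 := by
    field_simp
    linear_combination (1 + α - α ^ 2) * ha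
  have hentry : ∀ i j, M i j = ((N i j : ℤ) : ℝ) / 5 := by
    intro i j
    rw [hfact, hP, Matrix.smul_apply, Matrix.smul_apply, Matrix.map_apply,
      smul_eq_mul, smul_eq_mul, ← mul_assoc, hval]
    ring
  have hiff : ∀ c : ℤ, ((c : ZMod 5) = 0 ↔ (5 : ℤ) ∣ c) := fun c =>
    ZMod.intCast_zmod_eq_zero_iff_dvd c 5
  constructor
  · constructor
    · intro h
      have h11 := (int_div5 (N 1 1)).mp (by rw [← hentry 1 1]; exact h 1 1)
      rw [hiff] at h11 ⊢
      simp [hN] at h11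
      omega
    · intro h
      rw [hiff] at h
      intro i j
      rw [hentry i j]
      rw [int_div5, hiff]
      fin_cases i <;> fin_cases j <;> simp [hN] <;> omega
  · intro hX hW hY hZ
    have hX' : (5 : ℤ) ∣ X - 1 := by rw [← hiff]; push_cast; rw [hX]; ring
    have hW' : (5 : ℤ) ∣ W - 1 := by rw [← hiff]; push_cast; rw [hW]; ring
    have hY' : (5 : ℤ) ∣ Y := by rw [← hiff]; exact hY
    have hZ' : (5 : ℤ) ∣ Z := by rw [← hiff]; exact hZ
    intro i j
    rw [hentry i j, int_div5, hiff]
    fin_cases i <;> fin_cases j <;> simp [hN] <;> omega
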